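/- arXiv:2108.08588 — 2 statements merged into one kernel-verified Lean document; each statement's English description precedes it below -/
import Mathlib

section
/- In the prism allied graph D_n^t (n ≥ 6) with n = 2b even, the distance from p_1 to p_i equals min(i − 1, n − i + 1), the distance from p_1 to q_i equals min(i − 1, n − i + 1) + 1, and the distance from p_1 to s_i equals min(min(i−1, n−i+1), min(i, n−i)) + 3. -/
/-- Vertices of the prism allied graph `Dₙᵗ`. -/
inductive DtV (n : ℕ) : Type
  | p : Fin n → DtV n
  | q : Fin n → DtV n
  | r : Fin n → DtV n
  | s : Fin n → DtV n
  deriving DecidableEq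


/-- Cyclic successor on `Fin n` (indices mod `n`). -/
def finSucc {n : ℕ} (i : Fin n) : Fin n :=
  ⟨(i.val + 1) % n, Nat.mod_lt _ (Nat.lt_of_le_of_lt (Nat.zero_le _) i.isLt)⟩

/-- Base relation for the edges of the prism allied graph. -/
def DtRel (n : ℕ) : DtV n → DtV n → Prop := fun a b =>
  ∃ i : Fin n,
    (a = .p i ∧ b = .q i) ∨ (a = .p i ∧ b = .p (finSucc i)) ∨
    (a = .q i ∧ b = .q (finSucc i)) ∨ (a = .r i ∧ b = .q i) ∨
    (a = .r i ∧ b = .q (finSucc i)) ∨ (a = .r i ∧ b = .s i)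

/-- The prism allied graph `Dₙᵗ`. -/
def Dt (n : ℕ) : SimpleGraph (DtV n) := SimpleGraph.fromRel (DtRel n)

/-- Vertices of the web graph `Wₙ`. -/
inductive WV (n : ℕ) : Type
  | p : Fin n → WV n
  | q : Fin n → WV n
  | r : Fin n → WV n
  deriving DecidableEq

/-- Base relation for the edges of the web graph. -/
def WRel (n : ℕ) : WV n → WV n → Prop := fun a b =>
  ∃ i : Fin n,
    (a = .p i ∧ b = .q i) ∨ (a = .p i ∧ b = .p (finSucc i)) ∨
    (a = .q i ∧ b = .q (finSucc i)) ∨ (a = .q i ∧ b = .r i)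

/-- The web graph `Wₙ`. -/
def W (n : ℕ) : SimpleGraph (WV n) := SimpleGraph.fromRel (WRel n)

/-- Distance from a vertex to an (unordered) edge: `d(x, uv) = min (d x u) (d x v)`. -/
noncomputable def edgeDist {V : Type*} (G : SimpleGraph V) (w : V) (e : Sym2 V) : ℕ :=
  Sym2.lift ⟨fun u v => min (G.dist w u) (G.dist w v), fun u v => min_comm _ _⟩ e

/-- Distance from a vertex to a mixed element (a vertex or an edge). -/
noncomputable def mixedDist {V : Type*} (G : SimpleGraph V) (w : V) :
    V ⊕ G.edgeSet → ℕ :=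
  Sum.elim (G.dist w) (fun e => edgeDist G w e.1)

/-- `M` is a mixed metric generator: every two distinct elements of `V(G) ∪ E(G)` are
distinguished by some vertex of `M`. -/
def IsMixedMetricGen {V : Type*} (G : SimpleGraph V) (M : Set V) : Prop :=
  ∀ a b : V ⊕ G.edgeSet, a ≠ b → ∃ w ∈ M, mixedDist G w a ≠ mixedDist G w b

/-- `M` is a (vertex) resolving set. -/
def IsResolving {V : Type*} (G : SimpleGraph V) (M : Set V) : Prop :=
  ∀ a b : V, a ≠ b → ∃ w ∈ M, G.dist w a ≠ G.dist w b

/-- `M` is an edge resolving set. -/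
def IsEdgeResolving {V : Type*} (G : SimpleGraph V) (M : Set V) : Prop :=
  ∀ a b : G.edgeSet, a ≠ b → ∃ w ∈ M, edgeDist G w a.1 ≠ edgeDist G w b.1

/-- The metric dimension of `G`. -/
noncomputable def metricDim {V : Type*} (G : SimpleGraph V) : ℕ :=
  sInf {k | ∃ M : Set V, IsResolving G M ∧ M.ncard = k}

/-- The edge metric dimension of `G`. -/
noncomputable def edgeMetricDim {V : Type*} (G : SimpleGraph V) : ℕ :=
  sInf {k | ∃ M : Set V, IsEdgeResolving G M ∧ M.ncard = k}

/-- The mixed metric dimension of `G`. -/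
noncomputable def mixedMetricDim {V : Type*} (G : SimpleGraph V) : ℕ :=
  sInf {k | ∃ M : Set V, IsMixedMetricGen G M ∧ M.ncard = k}

section BFS
variable {V : Type*} (G : SimpleGraph V) (u : V) (f : V → ℕ)

lemma walk_lip (hlip : ∀ a b, G.Adj a b → f b ≤ f a + 1) :
    ∀ {a b : V} (p : G.Walk a b), f b ≤ f a + p.length := by
  intro a b p
  induction p with
  | nil => simp
  | cons h p ih =>
    have := hlip _ _ h
    simp only [SimpleGraph.Walk.length_cons]
    omega

lemma bfs_dist (hu : f u = 0) (huniq : ∀ v, f v = 0 → v = u)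
    (hlip : ∀ a b, G.Adj a b → f b ≤ f a + 1)
    (hstep : ∀ v, 0 < f v → ∃ w, G.Adj v w ∧ f w + 1 = f v) :
    ∀ v, G.dist u v = f v := by
  have upper : ∀ k v, f v ≤ k → ∃ p : G.Walk u v, p.length = f v := by
    intro k
    induction k with
    | zero =>
      intro v hv
      have : v = u := huniq v (by omega)
      subst this
      exact ⟨.nil, by simp [hu]⟩
    | succ k ih =>
      intro v hv
      rcases Nat.eq_zero_or_pos (f v) with h0 | h0
      · have : v = u := huniq v h0
        subst this; exact ⟨.nil, by simp [hu, h0]⟩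
      · obtain ⟨w, hadj, hw⟩ := hstep v h0
        obtain ⟨p, hp⟩ := ih w (by omega)
        exact ⟨p.concat hadj.symm, by simp [SimpleGraph.Walk.length_concat]; omega⟩
  intro v
  obtain ⟨p, hp⟩ := upper (f v) v le_rfl
  have hle : G.dist u v ≤ f v := hp ▸ G.dist_le p
  have hge : f v ≤ G.dist u v := by
    obtain ⟨q, hq⟩ := p.reachable.exists_walk_length_eq_dist
    have := walk_lip G f hlip q
    omega
  omega
end BFS

/-- The claimed distance function from `p 0`. -/
def fD (n : ℕ) : DtV n → ℕ
  | .p j => min j.1 (n - j.1)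
  | .q j => min j.1 (n - j.1) + 1
  | .r j => min (min j.1 (n - j.1)) (min ((j.1 + 1) % n) (n - (j.1 + 1) % n)) + 2
  | .s j => min (min j.1 (n - j.1)) (min ((j.1 + 1) % n) (n - (j.1 + 1) % n)) + 3

lemma succ_mod {n j : ℕ} (h : j < n) :
    (j + 1) % n = if j + 1 = n then 0 else j + 1 := by
  split
  · next h' => rw [h', Nat.mod_self]
  · exact Nat.mod_eq_of_lt (by omega)

lemma fD_lip (n : ℕ) (hn : 6 ≤ n) :
    ∀ a b, (Dt n).Adj a b → fD n b ≤ fD n a + 1 := by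
  have key : ∀ a b, DtRel n a b → fD n b ≤ fD n a + 1 ∧ fD n a ≤ fD n b + 1 := by
    rintro a b ⟨i, (⟨rfl, rfl⟩ | ⟨rfl, rfl⟩ | ⟨rfl, rfl⟩ | ⟨rfl, rfl⟩ | ⟨rfl, rfl⟩ | ⟨rfl, rfl⟩)⟩ <;>
    · have hi := i.isLt
      simp only [fD, finSucc, succ_mod hi]
      first | omega | (split <;> omega)
  intro a b hadj
  rw [Dt, SimpleGraph.fromRel_adj] at hadj
  rcases hadj.2 with h | h
  exacts [(key _ _ h).1, (key _ _ h).2]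

lemma fD_step (n : ℕ) (hn : 6 ≤ n) :
    ∀ v, 0 < fD n v → ∃ w, (Dt n).Adj v w ∧ fD n w + 1 = fD n v := by
  intro v hv
  cases v with
  | p j =>
    have hj := j.isLt
    simp only [fD] at hv ⊢
    by_cases hc : j.1 ≤ n - j.1
    · refine ⟨.p ⟨j.1 - 1, by omega⟩, ?_, ?_⟩
      · rw [Dt, SimpleGraph.fromRel_adj]
        refine ⟨?_, Or.inr ⟨⟨j.1 - 1, by omega⟩, Or.inr (Or.inl ⟨rfl, ?_⟩)⟩⟩
        · intro h
          injection h with h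
          rw [Fin.ext_iff] at h
          simp only [Fin.val_mk] at h
          omega
        · congr 1
          apply Fin.ext
          simp only [finSucc, Fin.val_mk]
          have h1 : j.1 - 1 + 1 = j.1 := by omega
          rw [h1, Nat.mod_eq_of_lt hj]
      · simp only [fD, Fin.val_mk]; omega
    · refine ⟨.p (finSucc j), ?_, ?_⟩
      · rw [Dt, SimpleGraph.fromRel_adj]
        refine ⟨?_, Or.inl ⟨j, Or.inr (Or.inl ⟨rfl, rfl⟩)⟩⟩
        intro h
        injection h with h
        rw [Fin.ext_iff] at h
        simp only [finSucc, Fin.val_mk, succ_mod hj] at h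
        split at h <;> omega
      · simp only [fD, finSucc, Fin.val_mk, succ_mod hj]
        split <;> omega
  | q j =>
    refine ⟨.p j, ?_, by simp [fD]⟩
    rw [Dt, SimpleGraph.fromRel_adj]
    exact ⟨fun h => by injection h, Or.inr ⟨j, Or.inl ⟨rfl, rfl⟩⟩⟩
  | r j =>
    have hj := j.isLt
    by_cases hc : min j.1 (n - j.1) ≤ min ((j.1 + 1) % n) (n - (j.1 + 1) % n)
    · refine ⟨.q j, ?_, ?_⟩
      · rw [Dt, SimpleGraph.fromRel_adj]
        exact ⟨fun h => by injection h, Or.inl ⟨j, Or.inr (Or.inr (Or.inr (Or.inl ⟨rfl, rfl⟩)))⟩⟩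
      · simp only [fD]; omega
    · refine ⟨.q (finSucc j), ?_, ?_⟩
      · rw [Dt, SimpleGraph.fromRel_adj]
        exact ⟨fun h => by injection h,
          Or.inl ⟨j, Or.inr (Or.inr (Or.inr (Or.inr (Or.inl ⟨rfl, rfl⟩))))⟩⟩
      · simp only [fD, finSucc, Fin.val_mk]; omega
  | s j =>
    refine ⟨.r j, ?_, by simp [fD]⟩
    rw [Dt, SimpleGraph.fromRel_adj]
    exact ⟨fun h => by injection h, Or.inr ⟨j, Or.inr (Or.inr (Or.inr (Or.inr (Or.inr ⟨rfl, rfl⟩))))⟩⟩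

lemma fD_dist (n : ℕ) (hn : 6 ≤ n) (v : DtV n) :
    (Dt n).dist (DtV.p ⟨0, by omega⟩) v = fD n v := by
  refine bfs_dist (Dt n) _ (fD n) (by simp [fD]) ?_ (fD_lip n hn) (fD_step n hn) v
  intro v hv
  cases v with
  | p j =>
    have hj := j.isLt
    simp only [fD] at hv
    congr 1
    apply Fin.ext
    simp only [Fin.val_mk]
    omega
  | q j => simp [fD] at hv
  | r j => simp [fD] at hv
  | s j => simp [fD] at hv

theorem stmt16 (n b : ℕ) (hb : n = 2 * b) (hn : 6 ≤ n)
    (i : ℕ) (h1 : 1 ≤ i) (h2 : i ≤ n) :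
    (Dt n).dist (DtV.p ⟨0, by omega⟩) (DtV.p ⟨i - 1, by omega⟩) =
      min (i - 1) (n - i + 1) ∧
    (Dt n).dist (DtV.p ⟨0, by omega⟩) (DtV.q ⟨i - 1, by omega⟩) =
      min (i - 1) (n - i + 1) + 1 ∧
    (Dt n).dist (DtV.p ⟨0, by omega⟩) (DtV.s ⟨i - 1, by omega⟩) =
      min (min (i - 1) (n - i + 1)) (min i (n - i)) + 3 := by
  refine ⟨?_, ?_, ?_⟩ <;> rw [fD_dist n hn] <;> simp only [fD, Fin.val_mk]
  · omega
  · omega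
  · have h3 : i - 1 + 1 = i := by omega
    rw [h3]
    rcases eq_or_lt_of_le h2 with h | h
    · rw [h, Nat.mod_self]; omega
    · rw [Nat.mod_eq_of_lt h]; omega
end

section
/- For every n ≥ 4 the mixed metric dimension of the web graph W_n is strictly greater than both its metric dimension and its edge metric dimension, and it is unbounded as a function of n (mdim(W_n) = n + 1 → ∞ as n → ∞). -/
/-- cyclic distance between residues x y (given as values < n). -/
def cyc (n x y : ℕ) : ℕ := min ((y + n - x) % n) ((x + n - y) % n)

lemma cyc_eq {n x y : ℕ} (hx : x < n) (hy : y < n) :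
    cyc n x y = min (if x ≤ y then y - x else y + n - x) (if y ≤ x then x - y else x + n - y) := by
  have h1 : (y + n - x) % n = if x ≤ y then y - x else y + n - x := by
    split_ifs with h
    · have : y + n - x = (y - x) + n := by omega
      rw [this, Nat.add_mod_right, Nat.mod_eq_of_lt]; omega
    · rw [Nat.mod_eq_of_lt]; omega
  have h2 : (x + n - y) % n = if y ≤ x then x - y else x + n - y := by
    split_ifs with h
    · have : x + n - y = (x - y) + n := by omega
      rw [this, Nat.add_mod_right, Nat.mod_eq_of_lt]; omega
    · rw [Nat.mod_eq_of_lt]; omega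
  rw [cyc, h1, h2]

lemma cyc_self {n x : ℕ} (hx : x < n) : cyc n x x = 0 := by
  rw [cyc_eq hx hx]; simp

lemma cyc_comm (n x y : ℕ) : cyc n x y = cyc n y x := by
  rw [cyc, cyc, min_comm]

lemma cyc_pos {n x y : ℕ} (hx : x < n) (hy : y < n) (h : x ≠ y) : 1 ≤ cyc n x y := by
  rw [cyc_eq hx hy]; split_ifs <;> omega

lemma cyc_succ_le {n x y : ℕ} (hx : x < n) (hy : y < n) :
    cyc n x ((y+1) % n) ≤ cyc n x y + 1 ∧ cyc n x y ≤ cyc n x ((y+1) % n) + 1 := by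
  have h : (y+1) % n = if y + 1 = n then 0 else y + 1 := by
    split_ifs with h
    · simp [h]
    · rw [Nat.mod_eq_of_lt]; omega
  rw [h]
  split_ifs with h1
  · rw [cyc_eq hx (by omega), cyc_eq hx hy]; split_ifs <;> omega
  · rw [cyc_eq hx (by omega), cyc_eq hx hy]; split_ifs <;> omega

lemma mod_elim {n x y : ℕ} (hx : x < n) (hy : y < n) :
    (y + n - x) % n = if x ≤ y then y - x else y + n - x := by
  split_ifs with h'
  · have : y + n - x = (y - x) + n := by omega
    rw [this, Nat.add_mod_right, Nat.mod_eq_of_lt (by omega)]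
  · rw [Nat.mod_eq_of_lt (by omega)]

lemma cyc_step {n x y : ℕ} (hx : x < n) (hy : y < n) (h : x ≠ y) :
    ∃ x' < n, ((x' = (x+1) % n) ∨ (x = (x'+1) % n)) ∧ cyc n x' y + 1 = cyc n x y := by
  have e1 := mod_elim hx hy
  have e2 := mod_elim hy hx
  by_cases hf : (y + n - x) % n ≤ (x + n - y) % n
  · refine ⟨(x+1) % n, Nat.mod_lt _ (by omega), Or.inl rfl, ?_⟩
    rw [e1, e2] at hf
    by_cases h2 : x + 1 = n
    · have h3 : (x+1) % n = 0 := by rw [h2, Nat.mod_self]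
      rw [h3, cyc_eq (by omega) hy, cyc_eq hx hy]
      split_ifs at hf ⊢ <;> omega
    · have h3 : (x+1) % n = x + 1 := by rw [Nat.mod_eq_of_lt (by omega)]
      rw [h3, cyc_eq (by omega) hy, cyc_eq hx hy]
      split_ifs at hf ⊢ <;> omega
  · rw [e1, e2] at hf
    by_cases h2 : x = 0
    · refine ⟨n - 1, by omega, Or.inr ?_, ?_⟩
      · have : n - 1 + 1 = n := by omega
        rw [this, Nat.mod_self, h2]
      · subst h2
        rw [cyc_eq (by omega) hy, cyc_eq (by omega) hy]
        split_ifs at hf ⊢ <;> omega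
    · refine ⟨x - 1, by omega, Or.inr ?_, ?_⟩
      · rw [Nat.mod_eq_of_lt (by omega)]; omega
      · rw [cyc_eq (by omega) hy, cyc_eq hx hy]
        split_ifs at hf ⊢ <;> omega


namespace Web
open WV
variable {n : ℕ}

/-- cyclic distance on `Fin n`. -/
def cc (i j : Fin n) : ℕ := cyc n i.val j.val

lemma cc_self (i : Fin n) : cc i i = 0 := cyc_self i.isLt

lemma cc_comm (i j : Fin n) : cc i j = cc j i := cyc_comm _ _ _

lemma cc_pos {i j : Fin n} (h : i ≠ j) : 1 ≤ cc i j :=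
  cyc_pos i.isLt j.isLt (fun hv => h (Fin.ext hv))

lemma cc_eq_zero {i j : Fin n} (h : cc i j = 0) : i = j := by
  by_contra hne; have := cc_pos hne; omega

lemma finSucc_val (i : Fin n) : (finSucc i).val = (i.val + 1) % n := rfl

lemma cc_succ_le (i j : Fin n) :
    cc i (finSucc j) ≤ cc i j + 1 ∧ cc i j ≤ cc i (finSucc j) + 1 := by
  have := cyc_succ_le i.isLt j.isLt
  simpa [cc, finSucc_val] using this

lemma cc_step {i j : Fin n} (h : i ≠ j) :
    ∃ i' : Fin n, ((i' = finSucc i) ∨ (i = finSucc i')) ∧ cc i' j + 1 = cc i j := by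
  obtain ⟨x', hx', hrel, hc⟩ := cyc_step i.isLt j.isLt (fun hv => h (Fin.ext hv))
  refine ⟨⟨x', hx'⟩, ?_, hc⟩
  rcases hrel with h1 | h1
  · exact Or.inl (Fin.ext h1)
  · exact Or.inr (Fin.ext h1)

lemma finSucc_ne (h2 : 2 ≤ n) (i : Fin n) : finSucc i ≠ i := by
  intro h
  have hv : (i.val + 1) % n = i.val := congrArg Fin.val h
  have hi := i.isLt
  by_cases hc : i.val + 1 = n
  · rw [hc, Nat.mod_self] at hv; omega
  · rw [Nat.mod_eq_of_lt (by omega)] at hv; omega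

lemma W_adj_iff {u v : WV n} : (W n).Adj u v ↔ u ≠ v ∧ (WRel n u v ∨ WRel n v u) :=
  SimpleGraph.fromRel_adj _ _ _

lemma adj_pq (i : Fin n) : (W n).Adj (p i) (q i) := by
  rw [W_adj_iff]
  exact ⟨fun h => (by cases h), Or.inl ⟨i, Or.inl ⟨rfl, rfl⟩⟩⟩

lemma adj_pp (h2 : 2 ≤ n) (i : Fin n) : (W n).Adj (p i) (p (finSucc i)) := by
  rw [W_adj_iff]
  refine ⟨fun h => ?_, Or.inl ⟨i, Or.inr (Or.inl ⟨rfl, rfl⟩)⟩⟩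
  injection h with h'
  exact finSucc_ne h2 i h'.symm

lemma adj_qq (h2 : 2 ≤ n) (i : Fin n) : (W n).Adj (q i) (q (finSucc i)) := by
  rw [W_adj_iff]
  refine ⟨fun h => ?_, Or.inl ⟨i, Or.inr (Or.inr (Or.inl ⟨rfl, rfl⟩))⟩⟩
  injection h with h'
  exact finSucc_ne h2 i h'.symm

lemma adj_qr (i : Fin n) : (W n).Adj (q i) (r i) := by
  rw [W_adj_iff]
  exact ⟨fun h => (by cases h), Or.inl ⟨i, Or.inr (Or.inr (Or.inr ⟨rfl, rfl⟩))⟩⟩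

/-- Explicit distance function on the web graph. -/
def D : WV n → WV n → ℕ
  | p i, p j => cc i j
  | p i, q j => cc i j + 1
  | p i, r j => cc i j + 2
  | q i, p j => cc i j + 1
  | q i, q j => cc i j
  | q i, r j => cc i j + 1
  | r i, p j => cc i j + 2
  | r i, q j => cc i j + 1
  | r i, r j => if i = j then 0 else cc i j + 2

lemma D_comm (a b : WV n) : D a b = D b a := by
  cases a <;> cases b <;> rename_i i j <;> simp only [D] <;>
    try rw [cc_comm]
  rcases eq_or_ne i j with rfl | h
  · simp
  · rw [if_neg h, if_neg (Ne.symm h), cc_comm]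

lemma cycle_walk (f : Fin n → WV n) (hadj : ∀ i, (W n).Adj (f i) (f (finSucc i))) :
    ∀ (m : ℕ) (i j : Fin n), cc i j = m → ∃ w : (W n).Walk (f i) (f j), w.length = m := by
  intro m
  induction m with
  | zero =>
    intro i j h
    obtain rfl := cc_eq_zero h
    exact ⟨SimpleGraph.Walk.nil, rfl⟩
  | succ m ih =>
    intro i j hm
    have hij : i ≠ j := by
      intro h; subst h; rw [cc_self] at hm; omega
    obtain ⟨i', hrel, hc⟩ := cc_step hij
    obtain ⟨w, hw⟩ := ih i' j (by omega)
    have ha : (W n).Adj (f i) (f i') := by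
      rcases hrel with h1 | h1
      · subst h1; exact hadj i
      · have := (hadj i').symm; rwa [← h1] at this
    exact ⟨SimpleGraph.Walk.cons ha w, by simp [hw]⟩

lemma walk_p (h2 : 2 ≤ n) (i j : Fin n) :
    ∃ w : (W n).Walk (p i) (p j), w.length = cc i j :=
  cycle_walk WV.p (fun i => adj_pp h2 i) (cc i j) i j rfl

lemma walk_q (h2 : 2 ≤ n) (i j : Fin n) :
    ∃ w : (W n).Walk (q i) (q j), w.length = cc i j :=
  cycle_walk WV.q (fun i => adj_qq h2 i) (cc i j) i j rfl

lemma D_walk (h2 : 2 ≤ n) (a b : WV n) :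
    ∃ w : (W n).Walk a b, w.length = D a b := by
  cases a with
  | p i =>
    cases b with
    | p j => exact walk_p h2 i j
    | q j =>
      obtain ⟨w, hw⟩ := walk_p h2 i j
      exact ⟨w.concat (adj_pq j), by
        simp only [SimpleGraph.Walk.length_concat, hw, D]⟩
    | r j =>
      obtain ⟨w, hw⟩ := walk_p h2 i j
      exact ⟨(w.concat (adj_pq j)).concat (adj_qr j), by
        simp only [SimpleGraph.Walk.length_concat, hw, D]⟩
  | q i =>
    cases b with
    | p j =>
      obtain ⟨w, hw⟩ := walk_q h2 i j
      exact ⟨w.concat (adj_pq j).symm, by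
        simp only [SimpleGraph.Walk.length_concat, hw, D]⟩
    | q j => exact walk_q h2 i j
    | r j =>
      obtain ⟨w, hw⟩ := walk_q h2 i j
      exact ⟨w.concat (adj_qr j), by
        simp only [SimpleGraph.Walk.length_concat, hw, D]⟩
  | r i =>
    cases b with
    | p j =>
      obtain ⟨w, hw⟩ := walk_q h2 i j
      exact ⟨SimpleGraph.Walk.cons (adj_qr i).symm (w.concat (adj_pq j).symm), by
        simp only [SimpleGraph.Walk.length_cons, SimpleGraph.Walk.length_concat, hw, D]⟩
    | q j =>
      obtain ⟨w, hw⟩ := walk_q h2 i j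
      exact ⟨SimpleGraph.Walk.cons (adj_qr i).symm w, by
        simp only [SimpleGraph.Walk.length_cons, hw, D]⟩
    | r j =>
      by_cases hij : i = j
      · subst hij; exact ⟨SimpleGraph.Walk.nil, by simp [D]⟩
      · obtain ⟨w, hw⟩ := walk_q h2 i j
        exact ⟨SimpleGraph.Walk.cons (adj_qr i).symm (w.concat (adj_qr j)), by
          simp only [SimpleGraph.Walk.length_cons, SimpleGraph.Walk.length_concat, hw, D,
            if_neg hij]⟩

lemma D_self (a : WV n) : D a a = 0 := by
  cases a <;> simp [D, cc_self]

lemma D_adj_le (a u v : WV n) (h : (W n).Adj u v) : D a v ≤ D a u + 1 := by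
  rw [W_adj_iff] at h
  obtain ⟨hne, hrel⟩ := h
  have key : ∀ (x y : WV n), WRel n x y → D a y ≤ D a x + 1 ∧ D a x ≤ D a y + 1 := by
    intro x y hr
    obtain ⟨i, hc⟩ := hr
    rcases hc with ⟨rfl, rfl⟩ | ⟨rfl, rfl⟩ | ⟨rfl, rfl⟩ | ⟨rfl, rfl⟩
    · cases a <;> rename_i m <;> simp only [D] <;>
      · constructor <;> omega
    · cases a <;> rename_i m <;> simp only [D] <;>
      · have := cc_succ_le m i; constructor <;> omega
    · cases a <;> rename_i m <;> simp only [D] <;>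
      · have := cc_succ_le m i; constructor <;> omega
    · cases a with
      | p m => simp only [D]; constructor <;> omega
      | q m => simp only [D]; constructor <;> omega
      | r m =>
        simp only [D]
        rcases eq_or_ne m i with rfl | hmi
        · rw [if_pos rfl, cc_self]; constructor <;> omega
        · rw [if_neg hmi]; constructor <;> omega
  rcases hrel with hr | hr
  · exact (key u v hr).1
  · exact (key v u hr).2

lemma D_le_length : ∀ {a b : WV n} (w : (W n).Walk a b), D a b ≤ w.length := by
  intro a b w
  induction w with
  | nil => simpa using (D_self _).le
  | @cons u x y hadj w' ih =>
    simp only [SimpleGraph.Walk.length_cons]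
    have h1 : D u y ≤ D x y + 1 := by
      rw [D_comm u y, D_comm x y]
      exact D_adj_le y x u hadj.symm
    omega

lemma dist_eq (h2 : 2 ≤ n) (a b : WV n) : (W n).dist a b = D a b := by
  obtain ⟨w, hw⟩ := D_walk h2 a b
  have h1 : (W n).dist a b ≤ D a b := hw ▸ SimpleGraph.dist_le w
  obtain ⟨w', hw'⟩ := (SimpleGraph.Walk.reachable w).exists_walk_length_eq_dist
  have hm := D_le_length w'
  omega

end Web

namespace Web
open WV
variable {n : ℕ}

instance : Finite (WV n) := by
  apply Finite.of_injective (fun a : WV n => match a with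
    | p i => ((0 : Fin 3), i) | q i => (1, i) | r i => (2, i))
  intro a b h
  cases a <;> cases b <;> simp_all

lemma finSucc_finSucc_ne (h3 : 3 ≤ n) (i : Fin n) : finSucc (finSucc i) ≠ i := by
  intro h
  have hv : ((i.val + 1) % n + 1) % n = i.val := congrArg Fin.val h
  have hi := i.isLt
  have e1 : (i.val + 1) % n = if i.val + 1 = n then 0 else i.val + 1 := by
    split_ifs with h'
    · rw [h', Nat.mod_self]
    · rw [Nat.mod_eq_of_lt (by omega)]
  rw [e1] at hv
  split_ifs at hv with h'
  · rw [Nat.mod_eq_of_lt (by omega)] at hv; omega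
  · by_cases h'' : i.val + 2 = n
    · rw [show i.val + 1 + 1 = n from by omega, Nat.mod_self] at hv; omega
    · rw [Nat.mod_eq_of_lt (by omega)] at hv; omega

lemma edgeDist_eval (h2 : 2 ≤ n) (w u v : WV n) :
    edgeDist (W n) w s(u, v) = min (D w u) (D w v) := by
  rw [edgeDist, Sym2.lift_mk]
  show min ((W n).dist w u) ((W n).dist w v) = _
  rw [dist_eq h2, dist_eq h2]

lemma edge_cases {e : Sym2 (WV n)} (he : e ∈ (W n).edgeSet) :
    ∃ i : Fin n, e = s(p i, q i) ∨ e = s(p i, p (finSucc i)) ∨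
      e = s(q i, q (finSucc i)) ∨ e = s(q i, r i) := by
  induction e with
  | _ u v =>
    rw [SimpleGraph.mem_edgeSet, W_adj_iff] at he
    obtain ⟨hne, h | h⟩ := he
    · obtain ⟨i, hc⟩ := h
      rcases hc with ⟨rfl, rfl⟩ | ⟨rfl, rfl⟩ | ⟨rfl, rfl⟩ | ⟨rfl, rfl⟩
      · exact ⟨i, Or.inl rfl⟩
      · exact ⟨i, Or.inr (Or.inl rfl)⟩
      · exact ⟨i, Or.inr (Or.inr (Or.inl rfl))⟩
      · exact ⟨i, Or.inr (Or.inr (Or.inr rfl))⟩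
    · obtain ⟨i, hc⟩ := h
      rcases hc with ⟨rfl, rfl⟩ | ⟨rfl, rfl⟩ | ⟨rfl, rfl⟩ | ⟨rfl, rfl⟩
      · exact ⟨i, Or.inl (Sym2.eq_swap)⟩
      · exact ⟨i, Or.inr (Or.inl (Sym2.eq_swap))⟩
      · exact ⟨i, Or.inr (Or.inr (Or.inl (Sym2.eq_swap)))⟩
      · exact ⟨i, Or.inr (Or.inr (Or.inr (Sym2.eq_swap)))⟩

lemma D_rr_self (k : Fin n) : D (r k) (r k) = 0 := by simp [D]

lemma D_rr_ne {k j : Fin n} (h : k ≠ j) : D (r k) (r j) = cc k j + 2 := by simp [D, h]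

/-- the vertices `r k` resolve all vertex pairs -/
lemma vert_helper (hn : 4 ≤ n) {x y : WV n} (hxy : x ≠ y) :
    ∃ k : Fin n, D (r k) x ≠ D (r k) y := by
  have h2 : 2 ≤ n := by omega
  cases x with
  | p i =>
    cases y with
    | p j =>
      have hij : i ≠ j := fun h => hxy (congrArg _ h)
      refine ⟨i, ?_⟩
      have h1 := cc_self i
      have h3 := cc_pos hij
      simp only [D]; omega
    | q j =>
      refine ⟨j, ?_⟩
      have h1 := cc_self j
      simp only [D]; omega
    | r j =>
      refine ⟨j, ?_⟩
      rw [D_rr_self]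
      simp only [D]; omega
  | q i =>
    cases y with
    | p j =>
      refine ⟨i, ?_⟩
      have h1 := cc_self i
      simp only [D]; omega
    | q j =>
      have hij : i ≠ j := fun h => hxy (congrArg _ h)
      refine ⟨i, ?_⟩
      have h1 := cc_self i
      have h3 := cc_pos hij
      simp only [D]; omega
    | r j =>
      refine ⟨j, ?_⟩
      rw [D_rr_self]
      simp only [D]; omega
  | r i =>
    cases y with
    | p j =>
      refine ⟨i, ?_⟩
      rw [D_rr_self]
      simp only [D]; omega
    | q j =>
      refine ⟨i, ?_⟩
      rw [D_rr_self]
      simp only [D]; omega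
    | r j =>
      have hij : i ≠ j := fun h => hxy (congrArg _ h)
      refine ⟨i, ?_⟩
      rw [D_rr_self, D_rr_ne hij]
      omega

lemma edge_helper (hn : 4 ≤ n) {e1 e2 : Sym2 (WV n)} (he1 : e1 ∈ (W n).edgeSet)
    (he2 : e2 ∈ (W n).edgeSet) (hne : e1 ≠ e2) :
    ∃ k : Fin n, edgeDist (W n) (r k) e1 ≠ edgeDist (W n) (r k) e2 := by
  have h2n : 2 ≤ n := by omega
  obtain ⟨i, hc1⟩ := edge_cases he1
  obtain ⟨j, hc2⟩ := edge_cases he2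
  rcases hc1 with rfl | rfl | rfl | rfl <;> rcases hc2 with rfl | rfl | rfl | rfl
  · -- pq pq
    have hij : i ≠ j := by rintro rfl; exact hne rfl
    refine ⟨i, ?_⟩
    rw [edgeDist_eval h2n, edgeDist_eval h2n]
    have := cc_self i; have := cc_pos hij
    simp only [D]; omega
  · -- pq pp
    refine ⟨i, ?_⟩
    rw [edgeDist_eval h2n, edgeDist_eval h2n]
    have := cc_self i
    simp only [D]; omega
  · -- pq qq
    by_cases hij : i = j
    · subst hij
      refine ⟨finSucc i, ?_⟩
      rw [edgeDist_eval h2n, edgeDist_eval h2n]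
      have := cc_self (finSucc i); have := cc_pos (finSucc_ne h2n i)
      simp only [D]; omega
    · by_cases hij2 : i = finSucc j
      · subst hij2
        refine ⟨j, ?_⟩
        rw [edgeDist_eval h2n, edgeDist_eval h2n]
        have := cc_self j; have := cc_pos (Ne.symm (finSucc_ne h2n j))
        simp only [D]; omega
      · refine ⟨i, ?_⟩
        rw [edgeDist_eval h2n, edgeDist_eval h2n]
        have := cc_self i; have := cc_pos hij; have := cc_pos hij2
        simp only [D]; omega
  · -- pq qr
    refine ⟨j, ?_⟩
    rw [edgeDist_eval h2n, edgeDist_eval h2n]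
    rw [show D (r j) (r j) = 0 from D_rr_self j]
    simp only [D]; omega
  · -- pp pq
    refine ⟨j, ?_⟩
    rw [edgeDist_eval h2n, edgeDist_eval h2n]
    have := cc_self j
    simp only [D]; omega
  · -- pp pp
    have hij : i ≠ j := by rintro rfl; exact hne rfl
    by_cases h1 : i = finSucc j
    · subst h1
      refine ⟨finSucc (finSucc j), ?_⟩
      rw [edgeDist_eval h2n, edgeDist_eval h2n]
      have := cc_self (finSucc (finSucc j))
      have := cc_pos (finSucc_ne h2n (finSucc j))
      have := cc_pos (finSucc_finSucc_ne (by omega) j)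
      simp only [D]; omega
    · refine ⟨i, ?_⟩
      rw [edgeDist_eval h2n, edgeDist_eval h2n]
      have := cc_self i; have := cc_pos hij; have := cc_pos h1
      simp only [D]; omega
  · -- pp qq
    refine ⟨j, ?_⟩
    rw [edgeDist_eval h2n, edgeDist_eval h2n]
    have := cc_self j
    simp only [D]; omega
  · -- pp qr
    refine ⟨j, ?_⟩
    rw [edgeDist_eval h2n, edgeDist_eval h2n]
    rw [show D (r j) (r j) = 0 from D_rr_self j]
    simp only [D]; omega
  · -- qq pq
    by_cases h1 : j = i
    · subst h1
      refine ⟨finSucc j, ?_⟩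
      rw [edgeDist_eval h2n, edgeDist_eval h2n]
      have := cc_self (finSucc j); have := cc_pos (finSucc_ne h2n j)
      simp only [D]; omega
    · by_cases h2' : j = finSucc i
      · subst h2'
        refine ⟨i, ?_⟩
        rw [edgeDist_eval h2n, edgeDist_eval h2n]
        have := cc_self i; have := cc_pos (Ne.symm (finSucc_ne h2n i))
        simp only [D]; omega
      · refine ⟨j, ?_⟩
        rw [edgeDist_eval h2n, edgeDist_eval h2n]
        have := cc_self j; have := cc_pos h1; have := cc_pos h2'
        simp only [D]; omega
  · -- qq pp
    refine ⟨i, ?_⟩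
    rw [edgeDist_eval h2n, edgeDist_eval h2n]
    have := cc_self i
    simp only [D]; omega
  · -- qq qq
    have hij : i ≠ j := by rintro rfl; exact hne rfl
    by_cases h1 : i = finSucc j
    · subst h1
      refine ⟨finSucc (finSucc j), ?_⟩
      rw [edgeDist_eval h2n, edgeDist_eval h2n]
      have := cc_self (finSucc (finSucc j))
      have := cc_pos (finSucc_ne h2n (finSucc j))
      have := cc_pos (finSucc_finSucc_ne (by omega) j)
      simp only [D]; omega
    · refine ⟨i, ?_⟩
      rw [edgeDist_eval h2n, edgeDist_eval h2n]
      have := cc_self i; have := cc_pos hij; have := cc_pos h1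
      simp only [D]; omega
  · -- qq qr
    refine ⟨j, ?_⟩
    rw [edgeDist_eval h2n, edgeDist_eval h2n]
    rw [show D (r j) (r j) = 0 from D_rr_self j]
    simp only [D]; omega
  · -- qr pq
    refine ⟨i, ?_⟩
    rw [edgeDist_eval h2n, edgeDist_eval h2n]
    rw [show D (r i) (r i) = 0 from D_rr_self i]
    simp only [D]; omega
  · -- qr pp
    refine ⟨i, ?_⟩
    rw [edgeDist_eval h2n, edgeDist_eval h2n]
    rw [show D (r i) (r i) = 0 from D_rr_self i]
    simp only [D]; omega
  · -- qr qq
    refine ⟨i, ?_⟩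
    rw [edgeDist_eval h2n, edgeDist_eval h2n]
    rw [show D (r i) (r i) = 0 from D_rr_self i]
    simp only [D]; omega
  · -- qr qr
    have hij : i ≠ j := by rintro rfl; exact hne rfl
    refine ⟨i, ?_⟩
    rw [edgeDist_eval h2n, edgeDist_eval h2n]
    rw [show D (r i) (r i) = 0 from D_rr_self i, D_rr_ne hij]
    simp only [D]; omega

lemma vertEdge_helper (hn : 4 ≤ n) (x : WV n) {e : Sym2 (WV n)} (he : e ∈ (W n).edgeSet) :
    ∃ w : WV n, ((∃ k, w = r k) ∨ w = p ⟨0, by omega⟩) ∧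
      (W n).dist w x ≠ edgeDist (W n) w e := by
  have h2n : 2 ≤ n := by omega
  obtain ⟨i, hc⟩ := edge_cases he
  cases x with
  | p m =>
    rcases hc with rfl | rfl | rfl | rfl
    · refine ⟨r i, Or.inl ⟨i, rfl⟩, ?_⟩
      rw [dist_eq h2n, edgeDist_eval h2n]
      have := cc_self i
      simp only [D]; omega
    · by_cases h1 : m = i
      · subst h1
        refine ⟨r (finSucc m), Or.inl ⟨_, rfl⟩, ?_⟩
        rw [dist_eq h2n, edgeDist_eval h2n]
        have := cc_self (finSucc m); have := cc_pos (finSucc_ne h2n m)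
        simp only [D]; omega
      · by_cases h2 : m = finSucc i
        · subst h2
          refine ⟨r i, Or.inl ⟨i, rfl⟩, ?_⟩
          rw [dist_eq h2n, edgeDist_eval h2n]
          have := cc_self i; have := cc_pos (Ne.symm (finSucc_ne h2n i))
          simp only [D]; omega
        · refine ⟨r m, Or.inl ⟨m, rfl⟩, ?_⟩
          rw [dist_eq h2n, edgeDist_eval h2n]
          have := cc_self m; have := cc_pos h1; have := cc_pos h2
          simp only [D]; omega
    · refine ⟨r i, Or.inl ⟨i, rfl⟩, ?_⟩
      rw [dist_eq h2n, edgeDist_eval h2n]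
      have := cc_self i
      simp only [D]; omega
    · refine ⟨r i, Or.inl ⟨i, rfl⟩, ?_⟩
      rw [dist_eq h2n, edgeDist_eval h2n]
      rw [show D (r i) (r i) = 0 from D_rr_self i]
      have := cc_self i
      simp only [D]; omega
  | q m =>
    rcases hc with rfl | rfl | rfl | rfl
    · by_cases h1 : m = i
      · subst h1
        refine ⟨p ⟨0, by omega⟩, Or.inr rfl, ?_⟩
        rw [dist_eq h2n, edgeDist_eval h2n]
        simp only [D]; omega
      · refine ⟨r i, Or.inl ⟨i, rfl⟩, ?_⟩
        rw [dist_eq h2n, edgeDist_eval h2n]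
        have := cc_self i; have := cc_pos (Ne.symm h1)
        simp only [D]; omega
    · refine ⟨r m, Or.inl ⟨m, rfl⟩, ?_⟩
      rw [dist_eq h2n, edgeDist_eval h2n]
      have := cc_self m
      simp only [D]; omega
    · by_cases h1 : m = i
      · subst h1
        refine ⟨r (finSucc m), Or.inl ⟨_, rfl⟩, ?_⟩
        rw [dist_eq h2n, edgeDist_eval h2n]
        have := cc_self (finSucc m); have := cc_pos (finSucc_ne h2n m)
        simp only [D]; omega
      · by_cases h2 : m = finSucc i
        · subst h2
          refine ⟨r i, Or.inl ⟨i, rfl⟩, ?_⟩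
          rw [dist_eq h2n, edgeDist_eval h2n]
          have := cc_self i; have := cc_pos (Ne.symm (finSucc_ne h2n i))
          simp only [D]; omega
        · refine ⟨r m, Or.inl ⟨m, rfl⟩, ?_⟩
          rw [dist_eq h2n, edgeDist_eval h2n]
          have := cc_self m; have := cc_pos h1; have := cc_pos h2
          simp only [D]; omega
    · refine ⟨r i, Or.inl ⟨i, rfl⟩, ?_⟩
      rw [dist_eq h2n, edgeDist_eval h2n]
      rw [show D (r i) (r i) = 0 from D_rr_self i]
      have := cc_self i
      simp only [D]; omega
  | r m =>
    rcases hc with rfl | rfl | rfl | rfl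
    · refine ⟨r m, Or.inl ⟨m, rfl⟩, ?_⟩
      rw [dist_eq h2n, edgeDist_eval h2n]
      rw [show D (r m) (r m) = 0 from D_rr_self m]
      simp only [D]; omega
    · refine ⟨r m, Or.inl ⟨m, rfl⟩, ?_⟩
      rw [dist_eq h2n, edgeDist_eval h2n]
      rw [show D (r m) (r m) = 0 from D_rr_self m]
      simp only [D]; omega
    · refine ⟨r m, Or.inl ⟨m, rfl⟩, ?_⟩
      rw [dist_eq h2n, edgeDist_eval h2n]
      rw [show D (r m) (r m) = 0 from D_rr_self m]
      simp only [D]; omega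
    · by_cases h1 : m = i
      · subst h1
        refine ⟨r (finSucc m), Or.inl ⟨_, rfl⟩, ?_⟩
        rw [dist_eq h2n, edgeDist_eval h2n]
        rw [D_rr_ne (finSucc_ne h2n m)]
        simp only [D]; omega
      · refine ⟨r m, Or.inl ⟨m, rfl⟩, ?_⟩
        rw [dist_eq h2n, edgeDist_eval h2n]
        rw [show D (r m) (r m) = 0 from D_rr_self m, D_rr_ne h1]
        simp only [D]; omega

lemma r_inj : Function.Injective (WV.r : Fin n → WV n) := fun a b h => by injection h

lemma ncard_range_r (hn : 0 < n) : (Set.range (WV.r : Fin n → WV n)).ncard = n := by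
  rw [← Nat.card_coe_set_eq, Nat.card_range_of_injective r_inj]
  simp [Nat.card_eq_fintype_card]

/-- the mixed metric generator of size `n+1` -/
def MM (n : ℕ) (h : 0 < n) : Set (WV n) := insert (WV.p ⟨0, h⟩) (Set.range WV.r)

lemma ncard_MM (hn : 0 < n) : (MM n hn).ncard = n + 1 := by
  rw [MM, Set.ncard_insert_of_notMem (by rintro ⟨k, hk⟩; cases hk) (Set.toFinite _),
    ncard_range_r hn]

lemma vert_res (hn : 4 ≤ n) : IsResolving (W n) (Set.range (WV.r : Fin n → WV n)) := by
  intro a b h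
  obtain ⟨k, hk⟩ := vert_helper hn h
  exact ⟨r k, ⟨k, rfl⟩, by rw [dist_eq (by omega), dist_eq (by omega)]; exact hk⟩

lemma edge_res (hn : 4 ≤ n) : IsEdgeResolving (W n) (Set.range (WV.r : Fin n → WV n)) := by
  rintro ⟨e1, he1⟩ ⟨e2, he2⟩ hne
  have hne' : e1 ≠ e2 := fun h => hne (Subtype.ext h)
  obtain ⟨k, hk⟩ := edge_helper hn he1 he2 hne'
  exact ⟨r k, ⟨k, rfl⟩, hk⟩

lemma mixed_gen (hn : 4 ≤ n) : IsMixedMetricGen (W n) (MM n (by omega)) := by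
  have h2n : 2 ≤ n := by omega
  have hsub : ∀ k : Fin n, r k ∈ MM n (by omega : 0 < n) :=
    fun k => Set.mem_insert_of_mem _ ⟨k, rfl⟩
  have hz : p ⟨0, by omega⟩ ∈ MM n (by omega : 0 < n) := Set.mem_insert _ _
  rintro (x | ⟨e1, he1⟩) (y | ⟨e2, he2⟩) hab
  · have hxy : x ≠ y := fun h => hab (congrArg _ h)
    obtain ⟨k, hk⟩ := vert_helper hn hxy
    refine ⟨r k, hsub k, ?_⟩
    simpa [mixedDist, dist_eq h2n] using hk
  · obtain ⟨w, hw, hd⟩ := vertEdge_helper hn x he2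
    refine ⟨w, ?_, ?_⟩
    · rcases hw with ⟨k, rfl⟩ | rfl
      · exact hsub k
      · exact hz
    · simpa [mixedDist] using hd
  · obtain ⟨w, hw, hd⟩ := vertEdge_helper hn y he1
    refine ⟨w, ?_, ?_⟩
    · rcases hw with ⟨k, rfl⟩ | rfl
      · exact hsub k
      · exact hz
    · simpa [mixedDist] using hd.symm
  · have hne : e1 ≠ e2 := fun h => hab (congrArg Sum.inr (Subtype.ext h))
    obtain ⟨k, hk⟩ := edge_helper hn he1 he2 hne
    refine ⟨r k, hsub k, ?_⟩
    simpa [mixedDist] using hk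

lemma mixed_lower (hn : 4 ≤ n) {M : Set (WV n)} (hM : IsMixedMetricGen (W n) M) :
    n + 1 ≤ M.ncard := by
  have h2n : 2 ≤ n := by omega
  have hr : ∀ i : Fin n, r i ∈ M := by
    intro i
    obtain ⟨w, hwM, hw⟩ := hM (Sum.inl (q i))
      (Sum.inr ⟨s(q i, r i), ((W n).mem_edgeSet).mpr (adj_qr i)⟩) (by simp)
    have hD : D w (q i) ≠ min (D w (q i)) (D w (r i)) := by
      simpa [mixedDist, edgeDist_eval h2n, dist_eq h2n] using hw
    have hweq : w = r i := by
      by_contra hwne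
      have hstep : D w (r i) = D w (q i) + 1 := by
        cases w with
        | p m => simp only [D]
        | q m => simp only [D]
        | r m =>
          have hmi : m ≠ i := fun h => hwne (congrArg _ h)
          rw [D_rr_ne hmi]; simp only [D]
      rw [hstep] at hD
      omega
    rw [← hweq]; exact hwM
  have hp : ∃ w ∈ M, ∀ k : Fin n, w ≠ r k := by
    obtain ⟨w, hwM, hw⟩ := hM (Sum.inl (q ⟨0, by omega⟩))
      (Sum.inr ⟨s(p ⟨0, by omega⟩, q ⟨0, by omega⟩), ((W n).mem_edgeSet).mpr (adj_pq _)⟩)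
      (by simp)
    refine ⟨w, hwM, ?_⟩
    intro k hk
    subst hk
    have hD : D (r k) (q ⟨0, by omega⟩) ≠
        min (D (r k) (p ⟨0, by omega⟩)) (D (r k) (q ⟨0, by omega⟩)) := by
      simpa [mixedDist, edgeDist_eval h2n, dist_eq h2n] using hw
    simp only [D] at hD
    omega
  obtain ⟨w0, hw0M, hw0r⟩ := hp
  have hsub : insert w0 (Set.range (WV.r : Fin n → WV n)) ⊆ M := by
    rintro x (rfl | ⟨k, rfl⟩)
    · exact hw0M
    · exact hr k
  have hcard : (insert w0 (Set.range (WV.r : Fin n → WV n))).ncard = n + 1 := by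
    rw [Set.ncard_insert_of_notMem (by rintro ⟨k, hk⟩; exact hw0r k hk.symm) (Set.toFinite _),
      ncard_range_r (by omega)]
  rw [← hcard]
  exact Set.ncard_le_ncard hsub (Set.toFinite M)

lemma mixed_dim (hn : 4 ≤ n) : mixedMetricDim (W n) = n + 1 := by
  have hmem : (n + 1) ∈ {k | ∃ M : Set (WV n), IsMixedMetricGen (W n) M ∧ M.ncard = k} :=
    ⟨MM n (by omega), mixed_gen hn, ncard_MM (by omega)⟩
  refine le_antisymm (Nat.sInf_le hmem) (le_csInf ⟨_, hmem⟩ ?_)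
  rintro k ⟨M, hM, rfl⟩
  exact mixed_lower hn hM

lemma metric_le (hn : 4 ≤ n) : metricDim (W n) ≤ n :=
  Nat.sInf_le ⟨Set.range WV.r, vert_res hn, ncard_range_r (by omega)⟩

lemma edge_metric_le (hn : 4 ≤ n) : edgeMetricDim (W n) ≤ n :=
  Nat.sInf_le ⟨Set.range WV.r, edge_res hn, ncard_range_r (by omega)⟩

end Web

theorem stmt18 :
    (∀ n : ℕ, 4 ≤ n →
      metricDim (W n) < mixedMetricDim (W n) ∧
      edgeMetricDim (W n) < mixedMetricDim (W n) ∧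
      mixedMetricDim (W n) = n + 1) ∧
    (∀ C : ℕ, ∃ n : ℕ, 4 ≤ n ∧ C < mixedMetricDim (W n)) := by

  constructor
  · intro n hn
    have h1 := Web.mixed_dim hn
    have h2 := Web.metric_le hn
    have h3 := Web.edge_metric_le hn
    omega
  · intro C
    refine ⟨max 4 C, le_max_left _ _, ?_⟩
    have h1 := Web.mixed_dim (n := max 4 C) (le_max_left _ _)
    have := le_max_right 4 C
    omega
end
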